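/- arXiv:1505.01364 — 2 statements merged into one kernel-verified Lean document; each statement's English description precedes it below -/
import Mathlib

section
/- (Schoenberg) If h : G × G → ℝ is a conditionally negative definite kernel, then for every t > 0 the kernel (x,y) ↦ exp(−t·h(x,y)) is positive definite. -/
def IsCondNegDef {G : Type*} (h : G → G → ℝ) : Prop :=
  (∀ x y, h x y = h y x) ∧ (∀ x, h x x = 0) ∧
  ∀ (n : ℕ) (x : Fin n → G) (c : Fin n → ℝ), (∑ i, c i) = 0 →
    (∑ i, ∑ j, c i * c j * h (x i) (x j)) ≤ 0

def IsPosDefKernel {G : Type*} (φ : G → G → ℝ) : Prop :=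
  (∀ x y, φ x y = φ y x) ∧
  ∀ (n : ℕ) (x : Fin n → G) (c : Fin n → ℝ),
    0 ≤ ∑ i, ∑ j, c i * c j * φ (x i) (x j)

/-- Quadratic form of a matrix as a double sum equals dot product form. -/
lemma quadform_eq {n : ℕ} (M : Matrix (Fin n) (Fin n) ℝ) (c : Fin n → ℝ) :
    ∑ i, ∑ j, c i * c j * M i j = dotProduct c (M.mulVec c) := by
  simp only [dotProduct, Matrix.mulVec, Finset.mul_sum]
  exact Finset.sum_congr rfl fun i _ => Finset.sum_congr rfl fun j _ => by ring

/-- Schur product theorem in quadratic form language. -/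
lemma schur_form {n : ℕ} (M N : Matrix (Fin n) (Fin n) ℝ)
    (hMs : ∀ i j, M i j = M j i)
    (hM : ∀ c : Fin n → ℝ, 0 ≤ ∑ i, ∑ j, c i * c j * M i j)
    (hN : ∀ c : Fin n → ℝ, 0 ≤ ∑ i, ∑ j, c i * c j * N i j)
    (c : Fin n → ℝ) : 0 ≤ ∑ i, ∑ j, c i * c j * (M i j * N i j) := by
  have hpsd : M.PosSemidef := by
    rw [Matrix.posSemidef_iff_dotProduct_mulVec]
    constructor
    · ext i j
      simp [Matrix.conjTranspose_apply, hMs i j]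
    · intro v
      have := hM v
      rw [quadform_eq] at this
      simpa using this
  obtain ⟨B, hB⟩ : ∃ B : Matrix (Fin n) (Fin n) ℝ, M = B.conjTranspose * B := by
    open scoped MatrixOrder in
    exact CStarAlgebra.nonneg_iff_eq_star_mul_self.mp hpsd.nonneg
  have hMeq : ∀ i j, M i j = ∑ k, B k i * B k j := by
    intro i j
    rw [hB]
    simp [Matrix.mul_apply, Matrix.conjTranspose_apply]
  have key : ∀ i j, c i * c j * (M i j * N i j)
      = ∑ k, (c i * B k i) * (c j * B k j) * N i j := by
    intro i j
    rw [hMeq i j, Finset.sum_mul, Finset.mul_sum]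
    exact Finset.sum_congr rfl fun k _ => by ring
  calc (0:ℝ) ≤ ∑ k, ∑ i, ∑ j, (c i * B k i) * (c j * B k j) * N i j :=
        Finset.sum_nonneg fun k _ => hN (fun i => c i * B k i)
    _ = ∑ i, ∑ k, ∑ j, (c i * B k i) * (c j * B k j) * N i j := Finset.sum_comm
    _ = ∑ i, ∑ j, ∑ k, (c i * B k i) * (c j * B k j) * N i j :=
        Finset.sum_congr rfl fun i _ => Finset.sum_comm
    _ = ∑ i, ∑ j, c i * c j * (M i j * N i j) :=
        Finset.sum_congr rfl fun i _ => Finset.sum_congr rfl fun j _ => (key i j).symm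

/-- Entrywise powers of a PSD kernel are PSD. -/
lemma pow_form {n : ℕ} (M : Matrix (Fin n) (Fin n) ℝ)
    (hMs : ∀ i j, M i j = M j i)
    (hM : ∀ c : Fin n → ℝ, 0 ≤ ∑ i, ∑ j, c i * c j * M i j)
    (k : ℕ) (c : Fin n → ℝ) : 0 ≤ ∑ i, ∑ j, c i * c j * (M i j) ^ k := by
  induction k generalizing c with
  | zero =>
    simp only [pow_zero, mul_one]
    have : ∑ i, ∑ j, c i * c j = (∑ i, c i) * (∑ j, c j) := by
      rw [Finset.sum_mul_sum]
    rw [this]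
    exact mul_self_nonneg _
  | succ m ih =>
    have := schur_form M (fun i j => (M i j) ^ m) hMs hM (fun c' => ih c') c
    calc (0:ℝ) ≤ ∑ i, ∑ j, c i * c j * (M i j * M i j ^ m) := this
      _ = ∑ i, ∑ j, c i * c j * M i j ^ (m + 1) := by
          exact Finset.sum_congr rfl fun i _ => Finset.sum_congr rfl fun j _ => by ring

/-- Entrywise exponential of a PSD kernel is PSD. -/
lemma exp_form {n : ℕ} (M : Matrix (Fin n) (Fin n) ℝ)
    (hMs : ∀ i j, M i j = M j i)
    (hM : ∀ c : Fin n → ℝ, 0 ≤ ∑ i, ∑ j, c i * c j * M i j)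
    (c : Fin n → ℝ) : 0 ≤ ∑ i, ∑ j, c i * c j * Real.exp (M i j) := by
  have hexp : ∀ i j, Real.exp (M i j) = ∑' k : ℕ, (M i j) ^ k / (k.factorial : ℝ) := by
    intro i j
    rw [Real.exp_eq_exp_ℝ, NormedSpace.exp_eq_tsum_div]
  have hsumm : ∀ i j : Fin n, Summable (fun k : ℕ => c i * c j * ((M i j) ^ k / (k.factorial : ℝ))) :=
    fun i j => (Real.summable_pow_div_factorial (M i j)).mul_left _
  have step1 : ∑ i, ∑ j, c i * c j * Real.exp (M i j)
      = ∑ i, ∑ j, ∑' k : ℕ, c i * c j * ((M i j) ^ k / (k.factorial : ℝ)) := by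
    refine Finset.sum_congr rfl fun i _ => Finset.sum_congr rfl fun j _ => ?_
    rw [hexp i j, tsum_mul_left]
  rw [step1]
  have hsumm2 : ∀ i, Summable (fun k : ℕ => ∑ j, c i * c j * ((M i j) ^ k / (k.factorial : ℝ))) :=
    fun i => summable_sum (fun j _ => hsumm i j)
  have step2 : ∑ i, ∑ j, ∑' k : ℕ, c i * c j * ((M i j) ^ k / (k.factorial : ℝ))
      = ∑' k : ℕ, ∑ i, ∑ j, c i * c j * ((M i j) ^ k / (k.factorial : ℝ)) := by
    calc ∑ i, ∑ j, ∑' k : ℕ, c i * c j * ((M i j) ^ k / (k.factorial : ℝ))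
        = ∑ i, ∑' k : ℕ, ∑ j, c i * c j * ((M i j) ^ k / (k.factorial : ℝ)) :=
          Finset.sum_congr rfl fun i _ => (Summable.tsum_finsetSum (fun j _ => hsumm i j)).symm
      _ = ∑' k : ℕ, ∑ i, ∑ j, c i * c j * ((M i j) ^ k / (k.factorial : ℝ)) :=
          (Summable.tsum_finsetSum (fun i _ => hsumm2 i)).symm
  rw [step2]
  refine tsum_nonneg fun k => ?_
  have h1 := pow_form M hMs hM k c
  have : ∑ i, ∑ j, c i * c j * ((M i j) ^ k / (k.factorial : ℝ))
      = (∑ i, ∑ j, c i * c j * (M i j) ^ k) / (k.factorial : ℝ) := by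
    rw [Finset.sum_div]
    refine Finset.sum_congr rfl fun i _ => ?_
    rw [Finset.sum_div]
    exact Finset.sum_congr rfl fun j _ => by ring
  rw [this]
  exact div_nonneg h1 (by positivity)

/-- The kernel ψ(x,y) = h(x,x₀) + h(y,x₀) - h(x,y) is positive semidefinite. -/
lemma psi_form {G : Type*} (h : G → G → ℝ) (hh : IsCondNegDef h) (x0 : G)
    {n : ℕ} (x : Fin n → G) (c : Fin n → ℝ) :
    0 ≤ ∑ i, ∑ j, c i * c j * (h (x i) x0 + h (x j) x0 - h (x i) (x j)) := by
  set S := ∑ i, c i with hS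
  have key := hh.2.2 (n + 1) (Fin.cons x0 x) (Fin.cons (-S) c)
    (by simp [Fin.sum_univ_succ, hS])
  simp only [Fin.sum_univ_succ, Fin.cons_zero, Fin.cons_succ, hh.2.1 x0] at key
  have hsym : ∀ j, h x0 (x j) = h (x j) x0 := fun j => hh.1 x0 (x j)
  simp only [hsym] at key
  -- key : (-S * (-S * 0) ... ) + ... ≤ 0, reorganize
  have e1 : ∑ i, ∑ j, c i * c j * (h (x i) x0 + h (x j) x0 - h (x i) (x j))
      = S * (∑ i, c i * h (x i) x0) + S * (∑ i, c i * h (x i) x0)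
        - ∑ i, ∑ j, c i * c j * h (x i) (x j) := by
    have a1 : ∑ i, ∑ j, c i * c j * h (x i) x0 = (∑ i, c i * h (x i) x0) * S := by
      rw [Finset.sum_mul_sum]
      exact Finset.sum_congr rfl fun i _ => Finset.sum_congr rfl fun j _ => by ring
    have a2 : ∑ i, ∑ j, c i * c j * h (x j) x0 = S * (∑ j, c j * h (x j) x0) := by
      rw [Finset.sum_mul_sum]
      exact Finset.sum_congr rfl fun i _ => Finset.sum_congr rfl fun j _ => by ring
    calc ∑ i, ∑ j, c i * c j * (h (x i) x0 + h (x j) x0 - h (x i) (x j))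
        = ∑ i, ∑ j, (c i * c j * h (x i) x0 + c i * c j * h (x j) x0
            - c i * c j * h (x i) (x j)) := by
          exact Finset.sum_congr rfl fun i _ => Finset.sum_congr rfl fun j _ => by ring
      _ = (∑ i, ∑ j, c i * c j * h (x i) x0) + (∑ i, ∑ j, c i * c j * h (x j) x0)
            - ∑ i, ∑ j, c i * c j * h (x i) (x j) := by
          simp [Finset.sum_add_distrib, Finset.sum_sub_distrib]
      _ = _ := by rw [a1, a2]; ring
  rw [e1]
  have e2 : ∑ i, -S * c i * h (x i) x0 = -S * ∑ i, c i * h (x i) x0 := by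
    rw [Finset.mul_sum]
    exact Finset.sum_congr rfl fun i _ => by ring
  have e3 : ∑ i, (c i * -S * h (x i) x0 + ∑ j, c i * c j * h (x i) (x j))
      = -S * (∑ i, c i * h (x i) x0) + ∑ i, ∑ j, c i * c j * h (x i) (x j) := by
    rw [Finset.sum_add_distrib]
    congr 1
    rw [Finset.mul_sum]
    exact Finset.sum_congr rfl fun i _ => by ring
  rw [e2, e3] at key
  linarith

theorem schoenberg {G : Type*} (h : G → G → ℝ) (hh : IsCondNegDef h) :
    ∀ t : ℝ, 0 < t → IsPosDefKernel (fun x y => Real.exp (-t * h x y)) := by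
  intro t ht
  constructor
  · intro x y
    simp [hh.1 x y]
  · intro n x c
    match n with
    | 0 => simp
    | Nat.succ m =>
      set x0 := x 0 with hx0
      -- h' = t • h is conditionally negative definite
      have hh' : IsCondNegDef (fun a b => t * h a b) := by
        refine ⟨fun a b => by simp [hh.1 a b], fun a => by simp [hh.2.1 a], ?_⟩
        intro k y d hd
        have := hh.2.2 k y d hd
        have e : ∑ i, ∑ j, d i * d j * (t * h (y i) (y j))
            = t * ∑ i, ∑ j, d i * d j * h (y i) (y j) := by
          rw [Finset.mul_sum]
          refine Finset.sum_congr rfl fun i _ => ?_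
          rw [Finset.mul_sum]
          exact Finset.sum_congr rfl fun j _ => by ring
        rw [e]
        exact mul_nonpos_of_nonneg_of_nonpos ht.le this
      set ψ : Matrix (Fin (m+1)) (Fin (m+1)) ℝ :=
        fun i j => t * h (x i) x0 + t * h (x j) x0 - t * h (x i) (x j) with hψ
      have hψs : ∀ i j, ψ i j = ψ j i := by
        intro i j
        simp only [hψ, hh.1 (x i) (x j)]
        ring
      have hψf : ∀ c' : Fin (m+1) → ℝ, 0 ≤ ∑ i, ∑ j, c' i * c' j * ψ i j :=
        fun c' => psi_form (fun a b => t * h a b) hh' x0 x c'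
      set a : Fin (m+1) → ℝ := fun i => Real.exp (-(t * h (x i) x0)) with ha
      have key : ∑ i, ∑ j, c i * c j * Real.exp (-t * h (x i) (x j))
          = ∑ i, ∑ j, (c i * a i) * (c j * a j) * Real.exp (ψ i j) := by
        refine Finset.sum_congr rfl fun i _ => Finset.sum_congr rfl fun j _ => ?_
        have : Real.exp (-t * h (x i) (x j)) = a i * a j * Real.exp (ψ i j) := by
          rw [ha, hψ]
          rw [← Real.exp_add, ← Real.exp_add]
          congr 1
          ring
        rw [this]
        ring
      rw [key]
      exact exp_form ψ hψs hψf (fun i => c i * a i)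
end

section
/- Let G be a group and k : G × G → [0,∞) a symmetric kernel. Suppose there exist a real Hilbert space H and maps R, S : G → H such that k(x,y) = ‖R(x) − R(y)‖² + ‖S(x) + S(y)‖² for all x, y ∈ G, and suppose k is bounded on every tube and proper. Then the kernel h(x,y) = ‖R(x) − R(y)‖² is conditionally negative definite, proper, and bounded on tubes. -/
def Tube {G : Type*} [Group G] (K : Set G) : Set (G × G) :=
  {p | p.1⁻¹ * p.2 ∈ K}

def IsProperKernel {G : Type*} [Group G] [TopologicalSpace G] (k : G → G → ℝ) : Prop :=
  ∀ M : ℝ, 0 < M → ∃ K : Set G, IsCompact K ∧ {p : G × G | k p.1 p.2 ≤ M} ⊆ Tube K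

def BoundedOnTubes {G : Type*} [Group G] [TopologicalSpace G] (k : G → G → ℝ) : Prop :=
  ∀ K : Set G, IsCompact K → ∃ M : ℝ, ∀ p ∈ Tube K, |k p.1 p.2| ≤ M

theorem split_kernel_gives_cnd_part
    {G H : Type*} [Group G] [TopologicalSpace G] [IsTopologicalGroup G]
    [LocallyCompactSpace G]
    [NormedAddCommGroup H] [InnerProductSpace ℝ H] [CompleteSpace H]
    (k : G → G → ℝ) (hnonneg : ∀ x y, 0 ≤ k x y)
    (hsymm : ∀ x y, k x y = k y x)
    (R S : G → H)
    (hsplit : ∀ x y, k x y = ‖R x - R y‖ ^ 2 + ‖S x + S y‖ ^ 2)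
    (hbdd : BoundedOnTubes k) (hproper : IsProperKernel k) :
    IsCondNegDef (fun x y => ‖R x - R y‖ ^ 2) ∧
    IsProperKernel (fun x y => ‖R x - R y‖ ^ 2) ∧
    BoundedOnTubes (fun x y => ‖R x - R y‖ ^ 2) := by
  -- h ≤ k pointwise
  have hle : ∀ x y, ‖R x - R y‖ ^ 2 ≤ k x y := by
    intro x y
    have := hsplit x y
    nlinarith [sq_nonneg ‖S x + S y‖]
  -- S is bounded: diagonal bound
  obtain ⟨M0, hM0⟩ := hbdd {1} isCompact_singleton
  have hSsq : ∀ x, 4 * ‖S x‖ ^ 2 ≤ M0 := by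
    intro x
    have hmem : ((x, x) : G × G) ∈ Tube ({1} : Set G) := by simp [Tube]
    have h1 := hM0 (x, x) hmem
    have h2 : k x x = 4 * ‖S x‖ ^ 2 := by
      have h3 := hsplit x x
      have h4 : S x + S x = (2 : ℝ) • S x := (two_smul ℝ (S x)).symm
      rw [h4] at h3
      rw [norm_smul] at h3
      simp at h3
      rw [h3]; ring
    rw [abs_of_nonneg (hnonneg x x)] at h1
    linarith
  -- k ≤ h + M0
  have hke : ∀ x y, k x y ≤ ‖R x - R y‖ ^ 2 + M0 := by
    intro x y
    have h3 := hsplit x y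
    have h4 : ‖S x + S y‖ ^ 2 ≤ M0 := by
      have h5 : ‖S x + S y‖ ≤ ‖S x‖ + ‖S y‖ := norm_add_le _ _
      have h6 : ‖S x + S y‖ ^ 2 ≤ (‖S x‖ + ‖S y‖) ^ 2 := by
        apply sq_le_sq' <;> nlinarith [norm_nonneg (S x + S y), norm_nonneg (S x), norm_nonneg (S y)]
      have := hSsq x
      have := hSsq y
      nlinarith [sq_nonneg (‖S x‖ - ‖S y‖)]
    linarith
  have hM0nn : 0 ≤ M0 := le_trans (abs_nonneg _) (hM0 (1, 1) (by simp [Tube]))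
  refine ⟨⟨?_, ?_, ?_⟩, ?_, ?_⟩
  · intro x y; simp [norm_sub_rev]
  · intro x; simp
  · intro n x c hc
    simp only
    have expand : ∀ i j : Fin n, ‖R (x i) - R (x j)‖ ^ 2
        = ‖R (x i)‖ ^ 2 + ‖R (x j)‖ ^ 2 - 2 * inner ℝ (R (x i)) (R (x j)) := by
      intro i j
      rw [@norm_sub_sq_real H _ _ (R (x i)) (R (x j))]; ring
    have hv : (∑ i, ∑ j, c i * c j * inner ℝ (R (x i)) (R (x j)) : ℝ)
        = inner ℝ (∑ i, c i • R (x i)) (∑ j, c j • R (x j)) := by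
      rw [sum_inner]
      refine Finset.sum_congr rfl fun i _ => ?_
      rw [inner_sum]
      refine Finset.sum_congr rfl fun j _ => ?_
      rw [real_inner_smul_left, real_inner_smul_right]; ring
    set T := ∑ j, c j * ‖R (x j)‖ ^ 2 with hT
    have e1 : ∀ i, ∑ j, c i * c j * ‖R (x i) - R (x j)‖ ^ 2
        = c i * T - 2 * ∑ j, c i * c j * inner ℝ (R (x i)) (R (x j)) := by
      intro i
      have e2 : ∑ j, c i * c j * ‖R (x i) - R (x j)‖ ^ 2
          = ∑ j, (c i * ‖R (x i)‖ ^ 2 * c j + c i * (c j * ‖R (x j)‖ ^ 2)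
              - 2 * (c i * c j * inner ℝ (R (x i)) (R (x j)))) := by
        refine Finset.sum_congr rfl fun j _ => ?_
        rw [expand i j]; ring
      rw [e2, Finset.sum_sub_distrib, Finset.sum_add_distrib, ← Finset.mul_sum,
        ← Finset.mul_sum, ← Finset.mul_sum, hc]
      ring
    have step : (∑ i, ∑ j, c i * c j * ‖R (x i) - R (x j)‖ ^ 2)
        = ∑ i, (c i * T - 2 * ∑ j, c i * c j * inner ℝ (R (x i)) (R (x j))) :=
      Finset.sum_congr rfl fun i _ => e1 i
    rw [step, Finset.sum_sub_distrib, ← Finset.sum_mul, hc, ← Finset.mul_sum, hv,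
      real_inner_self_eq_norm_sq]
    nlinarith [sq_nonneg ‖∑ i, c i • R (x i)‖]
  · intro M hM
    obtain ⟨K, hK, hKsub⟩ := hproper (M + M0) (by linarith)
    refine ⟨K, hK, fun p hp => ?_⟩
    apply hKsub
    simp only [Set.mem_setOf_eq] at hp ⊢
    have := hke p.1 p.2
    linarith
  · intro K hK
    obtain ⟨M, hM⟩ := hbdd K hK
    refine ⟨M, fun p hp => ?_⟩
    have h1 := hM p hp
    have h2 := hle p.1 p.2
    have h3 : (0:ℝ) ≤ ‖R p.1 - R p.2‖ ^ 2 := sq_nonneg _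
    rw [abs_of_nonneg h3]
    calc ‖R p.1 - R p.2‖ ^ 2 ≤ k p.1 p.2 := h2
      _ ≤ |k p.1 p.2| := le_abs_self _
      _ ≤ M := h1
end
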